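/- Let G be a balanced group and let C be an infinite cyclic subgroup of G. Then for all positive integers k ≤ m, N_G(k!C) ⊆ N_G(m!C), where k!C denotes the subgroup {c^{k!} : c ∈ C}, and moreover N_G[C] equals the union over all k ≥ 1 of N_G(k!C). -/

import Mathlib

def IsBalanced (G : Type*) [Group G] : Prop :=
  ∀ g h : G, ¬ IsOfFinOrder h → ∀ k l : ℤ, k ≠ 0 → l ≠ 0 →
    g * h ^ k * g⁻¹ = h ^ l → |k| = |l|

open Subgroup Pointwise

section Aux

variable {G : Type*} [Group G]

/-- If `g (c^n) g⁻¹ = (c^n)^ε` with `ε = ±1`, then `g` normalizes `⟨c^n⟩`. -/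
lemma mem_normalizer_of_conj_eq {g c : G} {n ε : ℤ} (hε : ε = 1 ∨ ε = -1)
    (h : g * c ^ n * g⁻¹ = c ^ (ε * n)) : g ∈ Subgroup.normalizer (zpowers (c ^ n) : Set G) := by
  have hεn : c ^ (ε * n) = (c ^ n) ^ ε := by rw [mul_comm, zpow_mul]
  have hfwd : ∀ m : ℤ, g * (c ^ n) ^ m * g⁻¹ = (c ^ n) ^ (ε * m) := by
    intro m
    rw [← conj_zpow, h, hεn, ← zpow_mul, ← zpow_mul, mul_comm ε m]
  have hback : g⁻¹ * c ^ n * g = (c ^ n) ^ ε := by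
    have h2 : g * (c ^ n) ^ ε * g⁻¹ = c ^ n := by
      have := hfwd ε
      rcases hε with rfl | rfl <;> simpa using this
    calc g⁻¹ * c ^ n * g = g⁻¹ * (g * (c ^ n) ^ ε * g⁻¹) * g := by rw [h2]
      _ = (c ^ n) ^ ε := by group
  have hbwd : ∀ m : ℤ, g⁻¹ * (c ^ n) ^ m * g = (c ^ n) ^ (ε * m) := by
    intro m
    have : g⁻¹ * (c ^ n) ^ m * (g⁻¹)⁻¹ = (g⁻¹ * c ^ n * (g⁻¹)⁻¹) ^ m := (conj_zpow).symm
    rw [inv_inv] at this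
    rw [this, hback, ← zpow_mul, mul_comm ε m, zpow_mul, ← zpow_mul, mul_comm m ε]
  rw [Subgroup.mem_normalizer_iff]
  intro x
  constructor
  · intro hx
    obtain ⟨m, rfl⟩ := Subgroup.mem_zpowers_iff.1 hx
    exact Subgroup.mem_zpowers_iff.2 ⟨ε * m, (hfwd m).symm⟩
  · intro hx
    obtain ⟨m, hm⟩ := Subgroup.mem_zpowers_iff.1 hx
    have hx' : x = g⁻¹ * (c ^ n) ^ m * g := by rw [hm]; group
    exact Subgroup.mem_zpowers_iff.2 ⟨ε * m, by rw [hx', hbwd m]⟩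

/-- In a balanced group, an element conjugating `c^a` into `⟨c⟩` (with `c` of infinite
order and `a ≠ 0`) sends `c^a` to `c^{±a}`. -/
lemma conj_eq_of_balanced (hG : IsBalanced G) {c : G} (hc : ¬ IsOfFinOrder c)
    {g : G} {a b : ℤ} (ha : a ≠ 0) (hab : g * c ^ a * g⁻¹ = c ^ b) :
    ∃ ε : ℤ, (ε = 1 ∨ ε = -1) ∧ b = ε * a := by
  have hinj : Function.Injective fun n : ℤ => c ^ n :=
    injective_zpow_iff_not_isOfFinOrder.2 hc
  have hb : b ≠ 0 := by
    rintro rfl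
    apply ha
    apply hinj
    simp only [zpow_zero] at hab ⊢
    have : c ^ a = g⁻¹ * 1 * g := by rw [← hab]; group
    simpa using this
  have habs := hG g c hc a b ha hb hab
  rcases abs_eq_abs.1 habs with h | h
  · exact ⟨1, Or.inl rfl, by omega⟩
  · exact ⟨-1, Or.inr rfl, by omega⟩

/-- `⟨c^n⟩` has finite index in `⟨c⟩`. -/
lemma relindex_zpowers_pow_ne_zero (c : G) {n : ℕ} (hn : n ≠ 0) :
    (zpowers (c ^ n)).relIndex (zpowers c) ≠ 0 := by
  haveI : NeZero n := ⟨hn⟩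
  set C := zpowers c with hC
  set D := (zpowers (c ^ n)).subgroupOf C with hD
  have hmem : ∀ i : ZMod n, c ^ ((i.val : ℤ)) ∈ C := fun i => ⟨(i.val : ℤ), rfl⟩
  have hsurj : Function.Surjective
      (fun i : ZMod n => (QuotientGroup.mk (⟨c ^ ((i.val : ℤ)), hmem i⟩ : C) : C ⧸ D)) := by
    intro q
    obtain ⟨x, rfl⟩ := QuotientGroup.mk_surjective q
    obtain ⟨m, hm⟩ := Subgroup.mem_zpowers_iff.1 x.2
    refine ⟨(m : ZMod n), ?_⟩
    refine (QuotientGroup.eq).2 ?_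
    refine Subgroup.mem_subgroupOf.2 ?_
    refine ⟨m / n, ?_⟩
    have hval : (((m : ZMod n).val : ℤ)) = m % n := ZMod.val_intCast m
    have hdiv : (n : ℤ) * (m / n) = m - m % n := by
      have := Int.mul_ediv_add_emod m n
      omega
    have hcoe : ((((⟨c ^ (((m : ZMod n).val : ℤ)), hmem _⟩ : C))⁻¹ * x : C) : G)
        = (c ^ (((m : ZMod n).val : ℤ)))⁻¹ * (c ^ m) := by
      rw [Subgroup.coe_mul, Subgroup.coe_inv, ← hm]
    show (c ^ n) ^ (m / n) = _
    rw [hcoe, ← zpow_neg, ← zpow_add, ← zpow_natCast c n, ← zpow_mul, hval, hdiv]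
    ring_nf
  have : Finite (C ⧸ D) := Finite.of_surjective _ hsurj
  exact Subgroup.index_ne_zero_of_finite

end Aux

/-- For a balanced group `G` and an infinite cyclic subgroup `C = ⟨c⟩`, the normalizers of
the subgroups `k!C = ⟨c^{k!}⟩` form a nested increasing family whose union is the
commensurator `N_G[C]`. -/
theorem commensurator_eq_iUnion_normalizers {G : Type*} [Group G] (hG : IsBalanced G)
    (c : G) (hc : ¬ IsOfFinOrder c) :
    (∀ k m : ℕ, 0 < k → k ≤ m →
      Subgroup.normalizer (Subgroup.zpowers (c ^ Nat.factorial k) : Set G) ≤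
        Subgroup.normalizer (Subgroup.zpowers (c ^ Nat.factorial m) : Set G)) ∧
    (∀ g : G, g ∈ Subgroup.Commensurable.commensurator (Subgroup.zpowers c) ↔
      ∃ k : ℕ, 1 ≤ k ∧ g ∈ Subgroup.normalizer (Subgroup.zpowers (c ^ Nat.factorial k) : Set G)) := by
  have hinj : Function.Injective fun n : ℤ => c ^ n :=
    injective_zpow_iff_not_isOfFinOrder.2 hc
  -- a normalizer element of ⟨c^n⟩ (n ≠ 0) conjugates c^n to c^{±n}
  have key : ∀ (g : G) (n : ℤ), n ≠ 0 → g ∈ Subgroup.normalizer (zpowers (c ^ n) : Set G) →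
      ∃ ε : ℤ, (ε = 1 ∨ ε = -1) ∧ g * c ^ n * g⁻¹ = c ^ (ε * n) := by
    intro g n hn hg
    have h1 : g * c ^ n * g⁻¹ ∈ zpowers (c ^ n) :=
      (Subgroup.mem_normalizer_iff.1 hg (c ^ n)).1 (Subgroup.mem_zpowers _)
    obtain ⟨s, hs⟩ := Subgroup.mem_zpowers_iff.1 h1
    have hs' : g * c ^ n * g⁻¹ = c ^ (n * s) := by rw [← hs, ← zpow_mul]
    obtain ⟨ε, hε, hb⟩ := conj_eq_of_balanced hG hc hn hs'
    exact ⟨ε, hε, by rw [hs', hb]⟩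
  -- monotonicity, generalized: if a ∣ b, a ≠ 0, then N(⟨c^a⟩) ≤ N(⟨c^b⟩)
  have mono : ∀ (g : G) (a b : ℤ), a ≠ 0 → a ∣ b → g ∈ Subgroup.normalizer (zpowers (c ^ a) : Set G) →
      g ∈ Subgroup.normalizer (zpowers (c ^ b) : Set G) := by
    intro g a b ha hab hg
    obtain ⟨t, rfl⟩ := hab
    obtain ⟨ε, hε, hconj⟩ := key g a ha hg
    apply mem_normalizer_of_conj_eq hε
    have : g * (c ^ a) ^ t * g⁻¹ = (c ^ (ε * a)) ^ t := by rw [← conj_zpow, hconj]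
    rw [← zpow_mul, ← zpow_mul] at this
    rw [show ε * (a * t) = ε * a * t by ring, this]
  constructor
  · -- nestedness
    intro k m hk hkm g hg
    have hfac : (Nat.factorial k : ℤ) ∣ (Nat.factorial m : ℤ) :=
      Int.natCast_dvd_natCast.2 (Nat.factorial_dvd_factorial hkm)
    have hk0 : (Nat.factorial k : ℤ) ≠ 0 := by
      exact_mod_cast Nat.factorial_ne_zero k
    rw [← zpow_natCast c (Nat.factorial k)] at hg
    rw [← zpow_natCast c (Nat.factorial m)]
    exact mono g _ _ hk0 hfac hg
  · intro g
    constructor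
    · -- commensurator → some normalizer
      intro hgcom
      rw [Commensurable.commensurator_mem_iff] at hgcom
      set C := zpowers c with hCdef
      set K : Subgroup G := ConjAct.toConjAct g • C with hKdef
      have hKcard : Nat.card K = 0 := by
        have h1 : Nat.card C = 0 := by
          rw [Nat.card_zpowers, orderOf_eq_zero_iff.2 hc]
        have h2 : Nat.card K = Nat.card C :=
          Nat.card_congr (Subgroup.equivSMul (ConjAct.toConjAct g) C).toEquiv.symm
        rw [h2, h1]
      have hrel : C.relIndex K ≠ 0 := hgcom.2
      have hcard0 : Nat.card (C.subgroupOf K) = 0 := by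
        have := Subgroup.card_mul_index (C.subgroupOf K)
        rw [hKcard] at this
        rcases Nat.mul_eq_zero.1 this with h | h
        · exact h
        · exact absurd h hrel
      have hinf : (C.subgroupOf K) ≠ ⊥ := by
        intro hbot
        rw [hbot] at hcard0
        simp [Subgroup.card_bot] at hcard0
      obtain ⟨x, hxmem, hxne⟩ := (C.subgroupOf K).bot_or_exists_ne_one.resolve_left hinf
      -- x : K, (x:G) ∈ C, x ≠ 1
      have hxC : (x : G) ∈ C := Subgroup.mem_subgroupOf.1 hxmem
      have hxK : (x : G) ∈ K := x.2
      have hxne1 : (x : G) ≠ 1 := fun h => hxne (Subtype.ext h)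
      obtain ⟨b, hb⟩ := Subgroup.mem_zpowers_iff.1 hxC
      have hxK' : g⁻¹ * (x : G) * g ∈ C := by
        have h2 := Subgroup.mem_pointwise_smul_iff_inv_smul_mem.1 hxK
        rwa [← ConjAct.toConjAct_inv, ConjAct.smul_def, ConjAct.ofConjAct_toConjAct,
          inv_inv] at h2
      obtain ⟨a, ha⟩ := Subgroup.mem_zpowers_iff.1 hxK'
      have hconj : g * c ^ a * g⁻¹ = c ^ b := by
        rw [ha, hb]; group
      have ha0 : a ≠ 0 := by
        rintro rfl
        apply hxne1
        simp only [zpow_zero] at ha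
        have h3 : g * (1 : G) * g⁻¹ = g * (g⁻¹ * (x : G) * g) * g⁻¹ := by rw [← ha]
        have h4 := h3.symm
        simpa [mul_assoc] using h4
      obtain ⟨ε, hε, hbe⟩ := conj_eq_of_balanced hG hc ha0 hconj
      refine ⟨a.natAbs, by omega, ?_⟩
      have hdvd : a ∣ (a.natAbs.factorial : ℤ) := by
        have : a.natAbs ∣ a.natAbs.factorial :=
          Nat.dvd_factorial (by omega) le_rfl
        exact (Int.natAbs_dvd).1 (Int.natCast_dvd_natCast.2 this)
      rw [← zpow_natCast c (Nat.factorial a.natAbs)]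
      have hga : g ∈ Subgroup.normalizer (zpowers (c ^ a) : Set G) :=
        mem_normalizer_of_conj_eq hε (by rw [hconj, hbe])
      exact mono g a _ ha0 hdvd hga
    · -- normalizer → commensurator
      rintro ⟨k, hk, hg⟩
      rw [Commensurable.commensurator_mem_iff]
      set C := zpowers c with hCdef
      set D := zpowers (c ^ Nat.factorial k) with hDdef
      have hDC : D ≤ C := Subgroup.zpowers_le.2 (Subgroup.mem_zpowers_iff.2 ⟨(Nat.factorial k : ℤ), zpow_natCast c _⟩)
      have hDCcom : Commensurable D C := by
        constructor
        · exact relindex_zpowers_pow_ne_zero c (Nat.factorial_ne_zero k)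
        · rw [Subgroup.relIndex_eq_one.2 hDC]; exact one_ne_zero
      have hsmul : ConjAct.toConjAct g • D = D := by
        ext x
        rw [Subgroup.mem_pointwise_smul_iff_inv_smul_mem, ConjAct.smul_def,
          ← ConjAct.toConjAct_inv, ConjAct.ofConjAct_toConjAct, inv_inv]
        have := Subgroup.mem_normalizer_iff.1 (inv_mem hg) x
        rw [inv_inv] at this
        exact this.symm
      have h1 : Commensurable (ConjAct.toConjAct g • C) (ConjAct.toConjAct g • D) :=
        (Commensurable.commensurable_conj _).1 hDCcom.symm
      rw [hsmul] at h1
      exact h1.trans hDCcom
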